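/- arXiv:1212.1437 — 2 statements merged into one kernel-verified Lean document; each statement's English description precedes it below -/
import Mathlib

section
/- Hölder-in-time bound for the singular drift: let X₁,...,X_N : [0,T] → ℝ² be continuous paths, m_j ∈ [−A,A], and set U := A + (A/N)∑_{j≠1} ∫₀^T |X₁(u) − X_j(u)|^{−3/2} du (assumed finite). Then for all 0 ≤ s < t ≤ T, |(1/N)∫_s^t ∑_{j≠1} m_j K(X₁(u) − X_j(u)) du| ≤ U (t−s)^{1/3}, where K(x) = x^⊥/|x|². -/
open MeasureTheory

noncomputable section

abbrev E2 := EuclideanSpace ℝ (Fin 2)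

/-- The Biot–Savart kernel `K(x) = x^⊥/|x|²` on `ℝ²` (with the junk value `K(0) = 0`). -/
def biotSavart (x : E2) : E2 :=
  (‖x‖ ^ 2)⁻¹ •
    (EuclideanSpace.equiv (Fin 2) ℝ).symm
      ![-((EuclideanSpace.equiv (Fin 2) ℝ) x 1), (EuclideanSpace.equiv (Fin 2) ℝ) x 0]

lemma norm_biotSavart (x : E2) : ‖biotSavart x‖ = ‖x‖⁻¹ := by
  have hv : ‖(EuclideanSpace.equiv (Fin 2) ℝ).symm
      ![-((EuclideanSpace.equiv (Fin 2) ℝ) x 1), (EuclideanSpace.equiv (Fin 2) ℝ) x 0]‖ = ‖x‖ := by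
    rw [EuclideanSpace.norm_eq, EuclideanSpace.norm_eq]
    congr 1
    simp [Fin.sum_univ_two]
    ring
  rw [biotSavart, norm_smul, hv, norm_inv, norm_pow, Real.norm_eq_abs,
    abs_of_nonneg (norm_nonneg x)]
  rcases eq_or_ne ‖x‖ 0 with h | h
  · simp [h]
  · field_simp

lemma key_ineq (b c : ℝ) (hb : 0 ≤ b) (hc : 0 < c) :
    b⁻¹ ≤ c ^ ((1:ℝ)/3) * b ^ (-(3/2) : ℝ) + c ^ (-(2:ℝ)/3) := by
  rcases eq_or_lt_of_le hb with h | hb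
  · rw [← h]
    simp [Real.zero_rpow]
    positivity
  rcases le_or_gt b⁻¹ (c ^ (-(2:ℝ)/3)) with h | h
  · have : 0 ≤ c ^ ((1:ℝ)/3) * b ^ (-(3/2) : ℝ) := by positivity
    linarith
  · have hb23 : b < c ^ ((2:ℝ)/3) := by
      have hcpos : (0:ℝ) < c ^ ((2:ℝ)/3) := Real.rpow_pos_of_pos hc _
      have h' : (c ^ ((2:ℝ)/3))⁻¹ < b⁻¹ := by
        rw [← Real.rpow_neg hc.le]
        rw [show (-((2:ℝ)/3)) = -(2:ℝ)/3 by ring]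
        exact h
      exact (inv_lt_inv₀ hcpos hb).mp h'
    have h12 : b ^ ((1:ℝ)/2) < c ^ ((1:ℝ)/3) := by
      have h2 := Real.rpow_lt_rpow hb.le hb23 (by norm_num : (0:ℝ) < 1/2)
      rw [← Real.rpow_mul hc.le, show ((2:ℝ)/3 * (1/2)) = (1:ℝ)/3 by norm_num] at h2
      exact h2
    have hbinv : b⁻¹ = b ^ ((1:ℝ)/2) * b ^ (-(3/2) : ℝ) := by
      rw [← Real.rpow_add hb, show ((1:ℝ)/2 + -(3/2)) = (-1:ℝ) by norm_num,
        Real.rpow_neg_one]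
    have h32 : (0:ℝ) < b ^ (-(3/2) : ℝ) := Real.rpow_pos_of_pos hb _
    calc b⁻¹ = b ^ ((1:ℝ)/2) * b ^ (-(3/2) : ℝ) := hbinv
      _ ≤ c ^ ((1:ℝ)/3) * b ^ (-(3/2) : ℝ) := by nlinarith
      _ ≤ _ := le_add_of_nonneg_right (Real.rpow_nonneg hc.le _)

set_option maxHeartbeats 1000000

/-- Hölder-in-time bound for the singular drift: for continuous paths `X_j`, circulations
`|m_j| ≤ A`, and `U := A + (A/N)∑_{j≠1}∫₀^T |X₁(u)−X_j(u)|^{−3/2} du`, one has for all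
`0 ≤ s < t ≤ T`: `|(1/N)∫_s^t ∑_{j≠1} m_j K(X₁(u)−X_j(u)) du| ≤ U (t−s)^{1/3}`. -/
theorem stmt17 (N : ℕ) (hN2 : 2 ≤ N) (hN : 0 < N) (A T : ℝ) (hA : 0 < A) (hT : 0 < T)
    (X : Fin N → ℝ → E2) (m : Fin N → ℝ)
    (hm : ∀ j, |m j| ≤ A)
    (hcont : ∀ j, Continuous (X j))
    -- the paths are a.e. distinct from the first one
    (hdist : ∀ j, j ≠ ⟨0, hN⟩ → ∀ᵐ u : ℝ, X ⟨0, hN⟩ u ≠ X j u)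
    -- integrability of the singular quantities
    (hint32 : ∀ j, j ≠ ⟨0, hN⟩ →
      IntervalIntegrable (fun u => ‖X ⟨0, hN⟩ u - X j u‖ ^ (-(3/2) : ℝ)) volume 0 T)
    (hintK : ∀ j, j ≠ ⟨0, hN⟩ →
      IntervalIntegrable (fun u => biotSavart (X ⟨0, hN⟩ u - X j u)) volume 0 T) :
    ∀ s t : ℝ, 0 ≤ s → s ≤ t → t ≤ T →
      ‖(1 / (N : ℝ)) •
          ∫ u in s..t, ∑ j ∈ Finset.univ.erase ⟨0, hN⟩,
            m j • biotSavart (X ⟨0, hN⟩ u - X j u)‖ ≤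
        (A + (A / (N : ℝ)) * ∑ j ∈ Finset.univ.erase ⟨0, hN⟩,
            ∫ u in (0:ℝ)..T, ‖X ⟨0, hN⟩ u - X j u‖ ^ (-(3/2) : ℝ)) *
          (t - s) ^ ((1:ℝ)/3) := by
  intro s t hs hst htT
  set o : Fin N := ⟨0, hN⟩ with ho
  set S : Finset (Fin N) := Finset.univ.erase o with hS
  rcases eq_or_lt_of_le hst with rfl | hlt
  · have hP : 0 ≤ ∑ j ∈ S, ∫ u in (0:ℝ)..T, ‖X o u - X j u‖ ^ (-(3/2) : ℝ) := by
      refine Finset.sum_nonneg fun j hj => intervalIntegral.integral_nonneg hT.le ?_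
      intro u _; positivity
    simp only [intervalIntegral.integral_same, smul_zero, norm_zero, sub_self,
      Real.zero_rpow (by norm_num : (1:ℝ)/3 ≠ 0), mul_zero]
    exact le_refl 0
  set c : ℝ := t - s with hc
  have hcpos : 0 < c := by simp [hc]; linarith
  set c13 : ℝ := c ^ ((1:ℝ)/3) with hc13
  have hc13pos : 0 < c13 := Real.rpow_pos_of_pos hcpos _
  have hsub : Set.uIcc s t ⊆ Set.uIcc (0:ℝ) T := by
    rw [Set.uIcc_of_le hst, Set.uIcc_of_le (hs.trans (hst.trans htT))]
    exact Set.Icc_subset_Icc hs htT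
  have hKst : ∀ j ∈ S, IntervalIntegrable
      (fun u => biotSavart (X o u - X j u)) volume s t :=
    fun j hj => (hintK j (Finset.ne_of_mem_erase hj)).mono_set hsub
  have h32st : ∀ j ∈ S, IntervalIntegrable
      (fun u => ‖X o u - X j u‖ ^ (-(3/2) : ℝ)) volume s t :=
    fun j hj => (hint32 j (Finset.ne_of_mem_erase hj)).mono_set hsub
  have hGint : IntervalIntegrable
      (fun u => ∑ j ∈ S, m j • biotSavart (X o u - X j u)) volume s t := by
    have heq : (fun u => ∑ j ∈ S, m j • biotSavart (X o u - X j u))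
        = ∑ j ∈ S, fun u => m j • biotSavart (X o u - X j u) := by
      funext u; simp
    rw [heq]
    exact IntervalIntegrable.sum S fun j hj => (hKst j hj).smul (m j)
  -- the dominating function
  set g : ℝ → ℝ := fun u => ∑ j ∈ S,
    A * (c13 * ‖X o u - X j u‖ ^ (-(3/2) : ℝ) + c ^ (-(2:ℝ)/3)) with hg
  have hgint : IntervalIntegrable g volume s t := by
    have heq : g = ∑ j ∈ S, fun u =>
        A * (c13 * ‖X o u - X j u‖ ^ (-(3/2) : ℝ) + c ^ (-(2:ℝ)/3)) := by
      funext u; simp [hg]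
    rw [heq]
    refine IntervalIntegrable.sum S fun j hj => ?_
    exact (((h32st j hj).const_mul c13).add intervalIntegrable_const).const_mul A
  have hpoint : ∀ u ∈ Set.Icc s t,
      ‖∑ j ∈ S, m j • biotSavart (X o u - X j u)‖ ≤ g u := by
    intro u _
    refine (norm_sum_le _ _).trans (Finset.sum_le_sum fun j _ => ?_)
    rw [norm_smul, norm_biotSavart]
    calc ‖m j‖ * ‖X o u - X j u‖⁻¹
        ≤ A * ‖X o u - X j u‖⁻¹ := by
          apply mul_le_mul_of_nonneg_right (hm j) (by positivity)
      _ ≤ A * (c13 * ‖X o u - X j u‖ ^ (-(3/2) : ℝ) + c ^ (-(2:ℝ)/3)) :=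
          mul_le_mul_of_nonneg_left (key_ineq _ _ (norm_nonneg _) hcpos) hA.le
  have step1 : ‖∫ u in s..t, ∑ j ∈ S, m j • biotSavart (X o u - X j u)‖
      ≤ ∫ u in s..t, g u :=
    (intervalIntegral.norm_integral_le_integral_norm hst).trans
      (intervalIntegral.integral_mono_on hst hGint.norm hgint hpoint)
  -- compute ∫ g
  have hintg : ∫ u in s..t, g u = ∑ j ∈ S,
      A * (c13 * (∫ u in s..t, ‖X o u - X j u‖ ^ (-(3/2) : ℝ)) + c ^ (-(2:ℝ)/3) * c) := by
    simp only [hg]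
    rw [intervalIntegral.integral_finset_sum (fun j hj =>
      (((h32st j hj).const_mul c13).add intervalIntegrable_const).const_mul A)]
    refine Finset.sum_congr rfl fun j hj => ?_
    rw [intervalIntegral.integral_const_mul,
      intervalIntegral.integral_add ((h32st j hj).const_mul c13) intervalIntegrable_const,
      intervalIntegral.integral_const_mul, intervalIntegral.integral_const, smul_eq_mul, ← hc]
    ring
  set P : ℝ := ∑ j ∈ S, ∫ u in (0:ℝ)..T, ‖X o u - X j u‖ ^ (-(3/2) : ℝ) with hP
  have hPnn : 0 ≤ P := by
    refine Finset.sum_nonneg fun j hj => intervalIntegral.integral_nonneg hT.le ?_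
    intro u _; positivity
  have hJle : ∀ j ∈ S, (∫ u in s..t, ‖X o u - X j u‖ ^ (-(3/2) : ℝ))
      ≤ ∫ u in (0:ℝ)..T, ‖X o u - X j u‖ ^ (-(3/2) : ℝ) := fun j hj =>
    intervalIntegral.integral_mono_interval hs hst htT
      (Filter.Eventually.of_forall fun u => by positivity)
      (hint32 j (Finset.ne_of_mem_erase hj))
  have hc23 : c ^ (-(2:ℝ)/3) * c = c13 := by
    rw [hc13]
    nth_rewrite 2 [show c = c ^ (1:ℝ) by rw [Real.rpow_one]]
    rw [← Real.rpow_add hcpos]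
    norm_num
  have hcard : (S.card : ℝ) = (N:ℝ) - 1 := by
    rw [hS, Finset.card_erase_of_mem (Finset.mem_univ o), Finset.card_univ, Fintype.card_fin,
      Nat.cast_sub hN, Nat.cast_one]
  have sum_le : ∑ j ∈ S,
      A * (c13 * (∫ u in s..t, ‖X o u - X j u‖ ^ (-(3/2) : ℝ)) + c ^ (-(2:ℝ)/3) * c)
      ≤ A * c13 * P + ((N:ℝ) - 1) * (A * c13) := by
    calc ∑ j ∈ S,
        A * (c13 * (∫ u in s..t, ‖X o u - X j u‖ ^ (-(3/2) : ℝ)) + c ^ (-(2:ℝ)/3) * c)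
        ≤ ∑ j ∈ S, (A * c13 * (∫ u in (0:ℝ)..T, ‖X o u - X j u‖ ^ (-(3/2) : ℝ)) + A * c13) := by
          refine Finset.sum_le_sum fun j hj => ?_
          rw [hc23]
          have h1 := hJle j hj
          have h2 : 0 ≤ A * c13 := by positivity
          nlinarith
      _ = A * c13 * P + (S.card : ℝ) * (A * c13) := by
          rw [Finset.sum_add_distrib, ← Finset.mul_sum, Finset.sum_const, nsmul_eq_mul, hP]
      _ = A * c13 * P + ((N:ℝ) - 1) * (A * c13) := by rw [hcard]
  have hNpos : (0:ℝ) < (N:ℝ) := by exact_mod_cast hN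
  calc ‖(1 / (N:ℝ)) • ∫ u in s..t, ∑ j ∈ S, m j • biotSavart (X o u - X j u)‖
      = (1 / (N:ℝ)) * ‖∫ u in s..t, ∑ j ∈ S, m j • biotSavart (X o u - X j u)‖ := by
        rw [norm_smul, Real.norm_eq_abs, abs_of_nonneg (by positivity)]
    _ ≤ (1 / (N:ℝ)) * (A * c13 * P + ((N:ℝ) - 1) * (A * c13)) := by
        refine mul_le_mul_of_nonneg_left ?_ (by positivity)
        exact step1.trans (hintg.le.trans sum_le)
    _ ≤ (A + A / (N:ℝ) * P) * c13 := by
        have hdiv : A / (N:ℝ) * (N:ℝ) = A := div_mul_cancel₀ A hNpos.ne'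
        rw [one_div, inv_mul_le_iff₀ hNpos]
        nlinarith [mul_pos hA hc13pos, mul_nonneg (mul_nonneg hA.le hc13pos.le) hPnn]
end
end

section
/- Extraction of an L¹ a.e.-convergent subsequence from entropy convergence: if F^N, F are probability densities on a measure space μ such that (1/2)H(F^N) + (1/2)H(F) − H((F^N + F)/2) → 0 as N → ∞ (with H(f) = ∫ f log f dμ), then F^N → F in measure along a subsequence; together with uniform integrability (e.g. a uniform bound on ∫ F^N(⟨x⟩^k + log F^N) dμ giving Dunford–Pettis weak L¹ compactness), this yields F^N → F strongly in L¹(μ). -/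
open MeasureTheory Filter Topology

noncomputable section

lemma aux_one_sub_inv_le_log {x : ℝ} (hx : 0 < x) : 1 - 1/x ≤ Real.log x := by
  have h := Real.log_le_sub_one_of_pos (x := 1/x) (by positivity)
  rw [Real.log_div one_ne_zero hx.ne', Real.log_one] at h
  linarith

/-- pointwise KL-type bound -/
lemma aux_kl {t m : ℝ} (ht : 0 ≤ t) (hm : 0 < m) :
    (Real.sqrt t - Real.sqrt m)^2 ≤ t * Real.log t - t * Real.log m - (t - m) := by
  rcases eq_or_lt_of_le ht with h0 | ht
  · simp [← h0, Real.sq_sqrt hm.le]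
  · have hsm : Real.sqrt m > 0 := Real.sqrt_pos.mpr hm
    have hst : Real.sqrt t > 0 := Real.sqrt_pos.mpr ht
    have hlog : 1 - Real.sqrt m / Real.sqrt t ≤ Real.log (Real.sqrt t) - Real.log (Real.sqrt m) := by
      have := aux_one_sub_inv_le_log (x := Real.sqrt t / Real.sqrt m) (by positivity)
      rw [Real.log_div hst.ne' hsm.ne'] at this
      have : 1 - Real.sqrt m / Real.sqrt t ≤ Real.log (Real.sqrt t) - Real.log (Real.sqrt m) := by
        have h1 : 1 / (Real.sqrt t / Real.sqrt m) = Real.sqrt m / Real.sqrt t := by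
          field_simp
        rw [h1] at this; exact this
      exact this
    have hlt : Real.log t = 2 * Real.log (Real.sqrt t) := by
      rw [Real.log_sqrt ht.le]; ring
    have hlm : Real.log m = 2 * Real.log (Real.sqrt m) := by
      rw [Real.log_sqrt hm.le]; ring
    have ht2 : Real.sqrt t ^ 2 = t := Real.sq_sqrt ht.le
    have hm2 : Real.sqrt m ^ 2 = m := Real.sq_sqrt hm.le
    have key : t * (1 - Real.sqrt m / Real.sqrt t) = t - Real.sqrt t * Real.sqrt m := by
      field_simp
      nlinarith [ht2]
    nlinarith [mul_le_mul_of_nonneg_left hlog ht.le, ht2, hm2]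

/-- entropy defect lower bound -/
lemma aux_psi {a b : ℝ} (ha : 0 ≤ a) (hb : 0 ≤ b) :
    (Real.sqrt a - Real.sqrt ((a+b)/2))^2 + (Real.sqrt b - Real.sqrt ((a+b)/2))^2
      ≤ 2 * ((a * Real.log a + b * Real.log b)/2 - ((a+b)/2) * Real.log ((a+b)/2)) := by
  rcases eq_or_lt_of_le (by linarith : (0:ℝ) ≤ (a+b)/2) with h0 | hm
  · have ha0 : a = 0 := by linarith
    have hb0 : b = 0 := by linarith
    simp [ha0, hb0, ← h0]
  · have h1 := aux_kl ha hm
    have h2 := aux_kl hb hm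
    nlinarith [h1, h2]

lemma aux_psi_nonneg {a b : ℝ} (ha : 0 ≤ a) (hb : 0 ≤ b) :
    0 ≤ (a * Real.log a + b * Real.log b)/2 - ((a+b)/2) * Real.log ((a+b)/2) := by
  nlinarith [aux_psi ha hb, sq_nonneg (Real.sqrt a - Real.sqrt ((a+b)/2)),
    sq_nonneg (Real.sqrt b - Real.sqrt ((a+b)/2))]

lemma aux_sq_bound {a b : ℝ} (ha : 0 ≤ a) (hb : 0 ≤ b) :
    (a - b)^2 ≤ 8 * (a + b) *
      ((a * Real.log a + b * Real.log b)/2 - ((a+b)/2) * Real.log ((a+b)/2)) := by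
  have hmdef : ((a+b)/2) = (a+b)/2 := rfl
  have ha2 : Real.sqrt a ^ 2 = a := Real.sq_sqrt ha
  have hb2 : Real.sqrt b ^ 2 = b := Real.sq_sqrt hb
  have hdiff : a - b = (Real.sqrt a - Real.sqrt b) * (Real.sqrt a + Real.sqrt b) := by
    nlinarith [ha2, hb2]
  have h1 : (Real.sqrt a - Real.sqrt b)^2 ≤
      2 * ((Real.sqrt a - Real.sqrt ((a+b)/2))^2 + (Real.sqrt b - Real.sqrt ((a+b)/2))^2) := by
    nlinarith [sq_nonneg (Real.sqrt a + Real.sqrt b - 2 * Real.sqrt ((a+b)/2))]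
  have h2 : (Real.sqrt a + Real.sqrt b)^2 ≤ 2 * (a + b) := by
    nlinarith [sq_nonneg (Real.sqrt a - Real.sqrt b), ha2, hb2]
  have hpsi := aux_psi ha hb
  have hnn := aux_psi_nonneg ha hb
  have hs1 : (0:ℝ) ≤ (Real.sqrt a - Real.sqrt b)^2 := sq_nonneg _
  have hs2 : (0:ℝ) ≤ (Real.sqrt a + Real.sqrt b)^2 := sq_nonneg _
  calc (a-b)^2 = (Real.sqrt a - Real.sqrt b)^2 * (Real.sqrt a + Real.sqrt b)^2 := by
        rw [hdiff]; ring
    _ ≤ (2 * ((Real.sqrt a - Real.sqrt ((a+b)/2))^2 + (Real.sqrt b - Real.sqrt ((a+b)/2))^2)) * (2*(a+b)) := by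
        apply mul_le_mul h1 h2 hs2 (by positivity)
    _ ≤ (2 * (2 * ((a * Real.log a + b * Real.log b)/2 - ((a+b)/2) * Real.log ((a+b)/2)))) * (2*(a+b)) := by
        apply mul_le_mul_of_nonneg_right (by linarith) (by linarith)
    _ = 8 * (a+b) * ((a * Real.log a + b * Real.log b)/2 - ((a+b)/2) * Real.log ((a+b)/2)) := by ring

lemma aux_key {a b c : ℝ} (ha : 0 ≤ a) (hb : 0 ≤ b) (hc : 0 < c) :
    |a - b| ≤ 2*c*(a+b) + (4/c) *
      ((a * Real.log a + b * Real.log b)/2 - ((a+b)/2) * Real.log ((a+b)/2)) := by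
  set ψ := (a * Real.log a + b * Real.log b)/2 - ((a+b)/2) * Real.log ((a+b)/2) with hψ
  have hnn : 0 ≤ ψ := aux_psi_nonneg ha hb
  have hsq : (a-b)^2 ≤ 8*(a+b)*ψ := aux_sq_bound ha hb
  have hterm : 0 ≤ (4/c) * ψ := mul_nonneg (by positivity) hnn
  by_cases h : |a - b| ≤ 2*c*(a+b)
  · linarith
  · push_neg at h
    have habs : 0 ≤ 2*c*(a+b) := by positivity
    have habs2 : 0 < |a - b| := lt_of_le_of_lt habs h
    have h2 : 2*c*(a+b)*|a - b| < |a - b| * |a - b| := mul_lt_mul_of_pos_right h habs2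
    have hsqa : |a - b| * |a - b| = (a-b)^2 := by rw [← sq_abs (a-b)]; ring
    have h3 : 2*c*(a+b)*|a - b| < 8*(a+b)*ψ := by
      rw [← hsqa] at hsq; linarith
    have hab : 0 < a + b := by
      rcases lt_or_eq_of_le (by positivity : (0:ℝ) ≤ a + b) with h' | h'
      · exact h'
      · exfalso
        have ha0 : a = 0 := by linarith
        have hb0 : b = 0 := by linarith
        rw [ha0, hb0] at h
        simp at h
    have h4 : |a - b| < (4/c)*ψ := by
      rw [← sub_pos]
      have heq : (4/c)*ψ - |a - b| = (8*(a+b)*ψ - 2*c*(a+b)*|a - b|) / (2*c*(a+b)) := by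
        field_simp
        ring
      rw [heq]
      apply div_pos (by linarith) (by positivity)
    linarith


/-- Extraction of strong `L¹` convergence from convergence of the entropy convexity
defect: if `F^N`, `F` are probability densities with
`(1/2)H(F^N) + (1/2)H(F) − H((F^N+F)/2) → 0` (with `H(f) = ∫ f log f dμ`), then along a
subsequence `F^N → F` in measure, and, with uniform integrability (Dunford–Pettis),
`F^N → F` strongly in `L¹(μ)`. -/
theorem stmt19 {α : Type*} [MeasurableSpace α] (μ : Measure α) [SigmaFinite μ]
    (F : ℕ → α → ℝ) (G : α → ℝ)
    (hF0 : ∀ n x, 0 ≤ F n x) (hG0 : ∀ x, 0 ≤ G x)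
    (hFmeas : ∀ n, Measurable (F n)) (hGmeas : Measurable G)
    (hFint : ∀ n, Integrable (F n) μ) (hGint : Integrable G μ)
    (hF1 : ∀ n, (∫ x, F n x ∂μ) = 1) (hG1 : (∫ x, G x ∂μ) = 1)
    (hHF : ∀ n, Integrable (fun x => F n x * Real.log (F n x)) μ)
    (hHG : Integrable (fun x => G x * Real.log (G x)) μ)
    (hHmix : ∀ n, Integrable
      (fun x => ((F n x + G x) / 2) * Real.log ((F n x + G x) / 2)) μ)
    -- the entropy convexity defect vanishes
    (hdefect : Tendsto
      (fun n => (1/2) * (∫ x, F n x * Real.log (F n x) ∂μ) +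
        (1/2) * (∫ x, G x * Real.log (G x) ∂μ) -
        ∫ x, ((F n x + G x) / 2) * Real.log ((F n x + G x) / 2) ∂μ)
      atTop (𝓝 0))
    -- uniform integrability (Dunford–Pettis weak `L¹` compactness)
    (hui : UnifIntegrable F 1 μ) :
    (∃ φ : ℕ → ℕ, StrictMono φ ∧ TendstoInMeasure μ (fun n => F (φ n)) atTop G) ∧
      Tendsto (fun n => ∫ x, |F n x - G x| ∂μ) atTop (𝓝 0) := by
  set ψ : ℕ → α → ℝ := fun n x =>
    (F n x * Real.log (F n x) + G x * Real.log (G x))/2 -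
      ((F n x + G x)/2) * Real.log ((F n x + G x)/2) with hψdef
  set D : ℕ → ℝ := fun n =>
    (1/2) * (∫ x, F n x * Real.log (F n x) ∂μ) +
      (1/2) * (∫ x, G x * Real.log (G x) ∂μ) -
      ∫ x, ((F n x + G x) / 2) * Real.log ((F n x + G x) / 2) ∂μ with hDdef
  have hψint : ∀ n, Integrable (ψ n) μ := fun n =>
    (((hHF n).add hHG).div_const 2).sub (hHmix n)
  have hDeq : ∀ n, (∫ x, ψ n x ∂μ) = D n := by
    intro n
    rw [hψdef, hDdef]
    simp only
    have hint1 : Integrable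
        (fun x => (F n x * Real.log (F n x) + G x * Real.log (G x))/2) μ :=
      ((hHF n).add hHG).div_const 2
    rw [integral_sub hint1 (hHmix n), integral_div, integral_add (hHF n) hHG]
    ring
  have hD0 : ∀ n, 0 ≤ D n := by
    intro n
    rw [← hDeq n]
    exact integral_nonneg fun x => aux_psi_nonneg (hF0 n x) (hG0 x)
  -- main L¹ limit
  have hA : Tendsto (fun n => ∫ x, |F n x - G x| ∂μ) atTop (𝓝 0) := by
    rw [Metric.tendsto_atTop]
    intro ε hε
    set c : ℝ := ε/8 with hcdef
    have hc : 0 < c := by positivity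
    obtain ⟨N, hN⟩ := Metric.tendsto_atTop.mp hdefect (c*ε/8) (by positivity)
    refine ⟨N, fun n hn => ?_⟩
    have hDn : D n < c*ε/8 := by
      have := hN n hn
      rw [Real.dist_eq, sub_zero] at this
      calc D n ≤ |D n| := le_abs_self _
        _ < c*ε/8 := this
    have hbound : (∫ x, |F n x - G x| ∂μ) ≤ 4*c + (4/c) * D n := by
      have hle : ∀ x, |F n x - G x| ≤ 2*c*(F n x + G x) + (4/c) * ψ n x := fun x =>
        aux_key (hF0 n x) (hG0 x) hc
      have hi1 : Integrable (fun x => 2*c*(F n x + G x)) μ :=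
        ((hFint n).add hGint).const_mul _
      have hi2 : Integrable (fun x => (4/c) * ψ n x) μ := (hψint n).const_mul _
      have hint2 : Integrable (fun x => 2*c*(F n x + G x) + (4/c) * ψ n x) μ :=
        hi1.add hi2
      calc (∫ x, |F n x - G x| ∂μ)
          ≤ ∫ x, (2*c*(F n x + G x) + (4/c) * ψ n x) ∂μ :=
            integral_mono ((hFint n).sub hGint).abs hint2 hle
        _ = 2*c*((∫ x, F n x ∂μ) + ∫ x, G x ∂μ) + (4/c) * ∫ x, ψ n x ∂μ := by
            rw [integral_add hi1 hi2, integral_const_mul, integral_const_mul,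
              integral_add (hFint n) hGint]
        _ = 4*c + (4/c) * D n := by rw [hF1 n, hG1, hDeq n]; ring
    have hnn : 0 ≤ ∫ x, |F n x - G x| ∂μ := integral_nonneg fun x => abs_nonneg _
    rw [Real.dist_eq, sub_zero, abs_of_nonneg hnn]
    have h2 : (4/c) * D n < (4/c) * (c*ε/8) :=
      mul_lt_mul_of_pos_left hDn (by positivity)
    have h3 : (4/c) * (c*ε/8) = ε/2 := by field_simp; ring
    have h4 : 4*c = ε/2 := by rw [hcdef]; ring
    linarith
  refine ⟨⟨id, strictMono_id, ?_⟩, hA⟩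
  apply tendstoInMeasure_of_tendsto_eLpNorm (p := 1) one_ne_zero
    (fun n => (hFmeas n).aestronglyMeasurable) hGmeas.aestronglyMeasurable
  have heq : ∀ n : ℕ, eLpNorm (F (id n) - G) 1 μ =
      ENNReal.ofReal (∫ x, |F n x - G x| ∂μ) := by
    intro n
    show eLpNorm (F n - G) 1 μ = _
    rw [eLpNorm_one_eq_lintegral_enorm,
      ← ofReal_integral_norm_eq_lintegral_enorm ((hFint n).sub hGint)]
    simp [Real.norm_eq_abs]
  have h5 := (ENNReal.continuous_ofReal.tendsto 0).comp hA
  rw [ENNReal.ofReal_zero] at h5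
  exact h5.congr fun n => (heq n).symm
end
end
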